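/- Let p ∈ ℂ⁴ be a unit vector, let {u₁,u₂} be an orthonormal basis of ℂ², and let {v₁,v₂} and {v'₁,v'₂} be two orthonormal bases of ℂ². Then for each i ∈ {1,2}: |⟨u_i ⊗ v₁, p⟩|² + |⟨u_i ⊗ v₂, p⟩|² = |⟨u_i ⊗ v'₁, p⟩|² + |⟨u_i ⊗ v'₂, p⟩|². That is, a product measurement satisfies the marginal distribution law in every state (Theorem 3 of the paper). -/

import Mathlib

open scoped InnerProductSpace
open Matrix

noncomputable section

/-- `ℂ²` as a Hilbert space. -/
abbrev C2 : Type := EuclideanSpace ℂ (Fin 2)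

/-- `ℂ⁴` as a Hilbert space. -/
abbrev C4 : Type := EuclideanSpace ℂ (Fin 4)

/-- Kronecker product of vectors: `(x ⊗ y)_(2i+j) = xᵢ · yⱼ`. -/
def vKron (x y : C2) : C4 :=
  (WithLp.equiv 2 (Fin 4 → ℂ)).symm fun k =>
    x (⟨k.val / 2, by omega⟩ : Fin 2) * y (⟨k.val % 2, by omega⟩ : Fin 2)

/-- Kronecker product of 2×2 matrices as a 4×4 matrix. -/
def mKron (M N : Matrix (Fin 2) (Fin 2) ℂ) : Matrix (Fin 4) (Fin 4) ℂ :=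
  Matrix.of fun i j =>
    M (⟨i.val / 2, by omega⟩ : Fin 2) (⟨j.val / 2, by omega⟩ : Fin 2) *
      N (⟨i.val % 2, by omega⟩ : Fin 2) (⟨j.val % 2, by omega⟩ : Fin 2)

/-- The rank-one matrix `u · uᴴ` (`uu*`). -/
def rankOne {n : ℕ} (u : EuclideanSpace ℂ (Fin n)) : Matrix (Fin n) (Fin n) ℂ :=
  Matrix.of fun i j => u i * star (u j)

/-- The vector `(a, b, c, d) ∈ ℂ⁴`. -/
def vec4 (a b c d : ℂ) : C4 :=
  (WithLp.equiv 2 (Fin 4 → ℂ)).symm ![a, b, c, d]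

private lemma parseval (v : Fin 2 → C2) (hv : Orthonormal ℂ v) (q : C2) :
    ∑ j : Fin 2, ‖⟪v j, q⟫_ℂ‖ ^ 2 = ‖q‖ ^ 2 := by
  let B : Module.Basis (Fin 2) ℂ C2 :=
    basisOfOrthonormalOfCardEqFinrank hv (by simp)
  have hB : ⇑B = v := coe_basisOfOrthonormalOfCardEqFinrank hv _
  let b : OrthonormalBasis (Fin 2) ℂ C2 := B.toOrthonormalBasis (by rwa [hB])
  have hb : ⇑b = v := by simp [b, hB]
  calc ∑ j : Fin 2, ‖⟪v j, q⟫_ℂ‖ ^ 2 = ∑ j : Fin 2, ‖b.repr q j‖ ^ 2 := by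
        simp [b.repr_apply_apply, hb]
    _ = ‖b.repr q‖ ^ 2 := by
        rw [EuclideanSpace.norm_eq, Real.sq_sqrt]
        positivity
    _ = ‖q‖ ^ 2 := by rw [b.repr.norm_map]

private lemma key (x w : C2) (p : C4) :
    ⟪vKron x w, p⟫_ℂ =
      ⟪w, (WithLp.equiv 2 (Fin 2 → ℂ)).symm
        (fun b => ∑ a : Fin 2, starRingEnd ℂ (x a) * p (⟨2*a.val+b.val, by omega⟩ : Fin 4))⟫_ℂ := by
  have e0 : vKron x w 0 = x 0 * w 0 := rfl
  have e1 : vKron x w 1 = x 0 * w 1 := rfl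
  have e2 : vKron x w 2 = x 1 * w 0 := rfl
  have e3 : vKron x w 3 = x 1 * w 1 := rfl
  simp only [PiLp.inner_apply, Fin.sum_univ_four, Fin.sum_univ_two, e0, e1, e2, e3,
    WithLp.equiv_symm_apply, PiLp.toLp_apply]
  have g0 : (⟨2*(0:Fin 2).val+(0:Fin 2).val, by omega⟩ : Fin 4) = 0 := rfl
  have g1 : (⟨2*(0:Fin 2).val+(1:Fin 2).val, by omega⟩ : Fin 4) = 1 := rfl
  have g2 : (⟨2*(1:Fin 2).val+(0:Fin 2).val, by omega⟩ : Fin 4) = 2 := rfl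
  have g3 : (⟨2*(1:Fin 2).val+(1:Fin 2).val, by omega⟩ : Fin 4) = 3 := rfl
  rw [g0, g1, g2, g3]
  simp only [RCLike.inner_apply, _root_.map_mul, _root_.map_add]
  ring

/-- Theorem 3 of the paper: a product measurement satisfies the marginal distribution law
in every state. For a unit vector `p ∈ ℂ⁴`, an orthonormal basis `{u₁,u₂}` of `ℂ²` and two
orthonormal bases `{v₁,v₂}`, `{v'₁,v'₂}` of `ℂ²`, for each `i`:
`|⟨uᵢ ⊗ v₁, p⟩|² + |⟨uᵢ ⊗ v₂, p⟩|² = |⟨uᵢ ⊗ v'₁, p⟩|² + |⟨uᵢ ⊗ v'₂, p⟩|²`. -/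
theorem stmt_2 (p : C4) (hp : ‖p‖ = 1)
    (u v v' : Fin 2 → C2) (hu : Orthonormal ℂ u) (hv : Orthonormal ℂ v)
    (hv' : Orthonormal ℂ v') :
    ∀ i : Fin 2,
      ∑ j : Fin 2, ‖⟪vKron (u i) (v j), p⟫_ℂ‖ ^ 2 =
        ∑ j : Fin 2, ‖⟪vKron (u i) (v' j), p⟫_ℂ‖ ^ 2 := by
  intro i
  simp only [key]
  rw [parseval v hv, parseval v' hv']
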